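/- Let (Ω, F, P) be a probability space, X : Ω → ℝ a square-integrable random variable, and A, B ∈ F disjoint events with P(A) = p and P(B) = q. Let u, v ∈ ℝ with u ≥ v, and suppose X ≥ u almost everywhere on A and X ≤ v almost everywhere on B. Then Var[X] ≥ p·q·(u-v)². -/

import Mathlib

open MeasureTheory ProbabilityTheory

set_option maxHeartbeats 1000000 in
/-- Variance lower bound: if `X` is square-integrable on a probability space,
`A`, `B` are disjoint events with probabilities `p`, `q`, and `X ≥ u` a.e. on `A`,
`X ≤ v` a.e. on `B` with `u ≥ v`, then `Var[X] ≥ p·q·(u-v)²`. -/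
theorem variance_lower_bound {Ω : Type*} [MeasurableSpace Ω]
    (P : Measure Ω) [IsProbabilityMeasure P]
    (X : Ω → ℝ) (hX : MemLp X 2 P)
    (A B : Set Ω) (hA : MeasurableSet A) (hB : MeasurableSet B)
    (hAB : Disjoint A B) (u v : ℝ) (huv : v ≤ u)
    (hXA : ∀ᵐ ω ∂P, ω ∈ A → u ≤ X ω)
    (hXB : ∀ᵐ ω ∂P, ω ∈ B → X ω ≤ v) :
    (P A).toReal * (P B).toReal * (u - v) ^ 2 ≤ variance X P := by
  set p := (P A).toReal with hp
  set q := (P B).toReal with hq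
  have hp0 : 0 ≤ p := ENNReal.toReal_nonneg
  have hq0 : 0 ≤ q := ENNReal.toReal_nonneg
  have hVnn : 0 ≤ variance X P := variance_nonneg X P
  rcases eq_or_lt_of_le hp0 with hp0' | hp0'
  · rw [← hp0']; simpa using hVnn
  rcases eq_or_lt_of_le hq0 with hq0' | hq0'
  · rw [← hq0']; simpa using hVnn
  -- main case
  set μ := ∫ ω, X ω ∂P with hμ
  set Z : Ω → ℝ := fun ω => X ω - μ with hZdef
  have hZ : MemLp Z 2 P := hX.sub (memLp_const μ)
  set Y : Ω → ℝ := fun ω => A.indicator (fun _ => q) ω - B.indicator (fun _ => p) ω with hYdef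
  have hYA : MemLp (A.indicator (fun _ => q)) 2 P :=
    memLp_indicator_const 2 hA q (Or.inr (measure_ne_top P A))
  have hYB : MemLp (B.indicator (fun _ => p)) 2 P :=
    memLp_indicator_const 2 hB p (Or.inr (measure_ne_top P B))
  have hY : MemLp Y 2 P := hYA.sub hYB
  have hXint : Integrable X P := hX.integrable (by norm_num)
  -- p + q ≤ 1
  have hpq1 : p + q ≤ 1 := by
    have : P A + P B = P (A ∪ B) := (measure_union hAB hB).symm
    have h1 : P (A ∪ B) ≤ 1 := prob_le_one
    have := ENNReal.toReal_mono (by norm_num) (this ▸ h1)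
    rwa [ENNReal.toReal_add (measure_ne_top P A) (measure_ne_top P B), ENNReal.toReal_one] at this
  -- set integral bounds
  have hIA : p * u ≤ ∫ ω in A, X ω ∂P := by
    have h := setIntegral_mono_ae_restrict (f := fun _ => u) (g := X)
      (integrableOn_const (measure_ne_top P A)) hXint.integrableOn
      ((ae_restrict_iff' hA).2 hXA)
    exact (by simpa [Measure.restrict_apply_univ] using h : P.real A * u ≤ _)
  have hIB : ∫ ω in B, X ω ∂P ≤ q * v := by
    have h := setIntegral_mono_ae_restrict (f := X) (g := fun _ => v)
      hXint.integrableOn (integrableOn_const (measure_ne_top P B))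
      ((ae_restrict_iff' hB).2 hXB)
    exact (by simpa [Measure.restrict_apply_univ] using h : _ ≤ P.real B * v)
  -- integrability of pieces
  have hintA : Integrable (fun ω => X ω * A.indicator (fun _ => q) ω) P := by
    have : (fun ω => X ω * A.indicator (fun _ => q) ω)
        = A.indicator (fun ω => X ω * q) := by
      funext ω; by_cases h : ω ∈ A <;> simp [Set.indicator_apply, h]
    rw [this]
    exact (hXint.mul_const q).indicator hA
  have hintB : Integrable (fun ω => X ω * B.indicator (fun _ => p) ω) P := by
    have : (fun ω => X ω * B.indicator (fun _ => p) ω)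
        = B.indicator (fun ω => X ω * p) := by
      funext ω; by_cases h : ω ∈ B <;> simp [Set.indicator_apply, h]
    rw [this]
    exact (hXint.mul_const p).indicator hB
  have hintXY : Integrable (fun ω => X ω * Y ω) P := by
    have : (fun ω => X ω * Y ω) = fun ω =>
        X ω * A.indicator (fun _ => q) ω - X ω * B.indicator (fun _ => p) ω := by
      funext ω; simp [hYdef]; ring
    rw [this]; exact hintA.sub hintB
  have hYint : Integrable Y P := hY.integrable (by norm_num)
  -- ∫ Y = 0
  have hIY : ∫ ω, Y ω ∂P = 0 := by
    rw [hYdef]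
    rw [integral_sub ((integrable_indicator_iff hA).2 (integrableOn_const (measure_ne_top P A))) ((integrable_indicator_iff hB).2 (integrableOn_const (measure_ne_top P B)))]
    rw [integral_indicator_const _ hA, integral_indicator_const _ hB]
    simp [Measure.real, ← hp, ← hq]; ring
  -- ∫ X * Y
  have hIXY : ∫ ω, X ω * Y ω ∂P = q * ∫ ω in A, X ω ∂P - p * ∫ ω in B, X ω ∂P := by
    have heq : (fun ω => X ω * Y ω) = fun ω =>
        X ω * A.indicator (fun _ => q) ω - X ω * B.indicator (fun _ => p) ω := by
      funext ω; simp [hYdef]; ring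
    rw [heq, integral_sub hintA hintB]
    have h1 : ∫ ω, X ω * A.indicator (fun _ => q) ω ∂P = q * ∫ ω in A, X ω ∂P := by
      have : (fun ω => X ω * A.indicator (fun _ => q) ω)
          = A.indicator (fun ω => q * X ω) := by
        funext ω; by_cases h : ω ∈ A <;> simp [Set.indicator_apply, h, mul_comm]
      rw [this, integral_indicator hA, integral_const_mul]
    have h2 : ∫ ω, X ω * B.indicator (fun _ => p) ω ∂P = p * ∫ ω in B, X ω ∂P := by
      have : (fun ω => X ω * B.indicator (fun _ => p) ω)
          = B.indicator (fun ω => p * X ω) := by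
        funext ω; by_cases h : ω ∈ B <;> simp [Set.indicator_apply, h, mul_comm]
      rw [this, integral_indicator hB, integral_const_mul]
    rw [h1, h2]
  -- ∫ Z * Y
  have hIZY : ∫ ω, Z ω * Y ω ∂P = ∫ ω, X ω * Y ω ∂P := by
    have heq : (fun ω => Z ω * Y ω) = fun ω => X ω * Y ω - μ * Y ω := by
      funext ω; simp [hZdef]; ring
    rw [heq, integral_sub hintXY (hYint.const_mul μ), integral_const_mul, hIY]
    ring
  have hZYge : p * q * (u - v) ≤ ∫ ω, Z ω * Y ω ∂P := by
    rw [hIZY, hIXY]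
    nlinarith [hIA, hIB, hp0'.le, hq0'.le]
  -- ∫ Y ^ 2
  have hIY2 : ∫ ω, Y ω ^ 2 ∂P = q ^ 2 * p + p ^ 2 * q := by
    have heq : (fun ω => Y ω ^ 2) = fun ω =>
        A.indicator (fun _ => q ^ 2) ω + B.indicator (fun _ => p ^ 2) ω := by
      funext ω
      by_cases hωA : ω ∈ A
      · have hωB : ω ∉ B := Set.disjoint_left.mp hAB hωA
        simp [hYdef, Set.indicator_apply, hωA, hωB]
      · by_cases hωB : ω ∈ B
        · simp [hYdef, Set.indicator_apply, hωA, hωB]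
        · simp [hYdef, Set.indicator_apply, hωA, hωB]
    rw [heq, integral_add ((integrable_indicator_iff hA).2 (integrableOn_const (measure_ne_top P A))) ((integrable_indicator_iff hB).2 (integrableOn_const (measure_ne_top P B)))]
    rw [integral_indicator_const _ hA, integral_indicator_const _ hB]
    simp [Measure.real, ← hp, ← hq]; ring
  -- Cauchy-Schwarz in L2
  set F : Lp ℝ 2 P := hZ.toLp Z with hF
  set G : Lp ℝ 2 P := hY.toLp Y with hG
  have hFG : (inner ℝ F G) = ∫ ω, Z ω * Y ω ∂P := by
    rw [MeasureTheory.L2.inner_def]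
    refine integral_congr_ae ?_
    filter_upwards [hZ.coeFn_toLp, hY.coeFn_toLp] with ω h1 h2
    simp [RCLike.inner_apply, hF, hG, h1, h2, mul_comm]
  have hFF : (inner ℝ F F) = ∫ ω, Z ω ^ 2 ∂P := by
    rw [MeasureTheory.L2.inner_def]
    refine integral_congr_ae ?_
    filter_upwards [hZ.coeFn_toLp] with ω h1
    simp [RCLike.inner_apply, hF, h1, sq]
  have hGG : (inner ℝ G G) = ∫ ω, Y ω ^ 2 ∂P := by
    rw [MeasureTheory.L2.inner_def]
    refine integral_congr_ae ?_
    filter_upwards [hY.coeFn_toLp] with ω h1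
    simp [RCLike.inner_apply, hG, h1, sq]
  have hCS : (∫ ω, Z ω * Y ω ∂P) ^ 2 ≤ (∫ ω, Z ω ^ 2 ∂P) * ∫ ω, Y ω ^ 2 ∂P := by
    have h1 : (inner ℝ F G) ≤ ‖F‖ * ‖G‖ := real_inner_le_norm F G
    have h2 : ‖F‖ ^ 2 = (inner ℝ F F) := (real_inner_self_eq_norm_sq F).symm
    have h3 : ‖G‖ ^ 2 = (inner ℝ G G) := (real_inner_self_eq_norm_sq G).symm
    have hc0 : 0 ≤ (inner ℝ F G) := by
      rw [hFG]; exact le_trans (mul_nonneg (mul_nonneg hp0 hq0) (by linarith)) hZYge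
    rw [← hFG, ← hFF, ← hGG]
    calc (inner ℝ F G) ^ 2 ≤ (‖F‖ * ‖G‖) ^ 2 := by nlinarith
      _ = ‖F‖ ^ 2 * ‖G‖ ^ 2 := by ring
      _ = (inner ℝ F F) * (inner ℝ G G) := by rw [h2, h3]
  -- variance
  have hvar : variance X P = ∫ ω, Z ω ^ 2 ∂P := by
    rw [variance_eq_integral hX.aestronglyMeasurable.aemeasurable]
  -- conclude
  rw [hvar]
  have key : (p * q * (u - v)) ^ 2 ≤ (∫ ω, Z ω ^ 2 ∂P) * (q ^ 2 * p + p ^ 2 * q) := by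
    rw [← hIY2]
    have h0 : 0 ≤ p * q * (u - v) := mul_nonneg (mul_nonneg hp0 hq0) (by linarith)
    nlinarith [hCS, hZYge]
  have hVnn' : 0 ≤ ∫ ω, Z ω ^ 2 ∂P := by rw [← hvar]; exact hVnn
  have h1 : (∫ ω, Z ω ^ 2 ∂P) * (q ^ 2 * p + p ^ 2 * q) ≤ (∫ ω, Z ω ^ 2 ∂P) * (p * q) := by
    nlinarith [mul_nonneg (mul_nonneg hVnn' (mul_pos hp0' hq0').le)
      (by linarith : (0:ℝ) ≤ 1 - (p + q))]
  have h2 : p * q * (p * q * (u - v) ^ 2) ≤ p * q * (∫ ω, Z ω ^ 2 ∂P) :=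
    calc p * q * (p * q * (u - v) ^ 2) = (p * q * (u - v)) ^ 2 := by ring
      _ ≤ (∫ ω, Z ω ^ 2 ∂P) * (q ^ 2 * p + p ^ 2 * q) := key
      _ ≤ (∫ ω, Z ω ^ 2 ∂P) * (p * q) := h1
      _ = p * q * (∫ ω, Z ω ^ 2 ∂P) := by ring
  exact le_of_mul_le_mul_left h2 (mul_pos hp0' hq0')
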